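/- Let I and J be finite nonempty sets, let P be an irreducible stochastic matrix on I with stationary distribution π, let H be an entrywise nonnegative I×J matrix each of whose columns contains a strictly positive entry, and let P̂ be an entrywise nonnegative J×J matrix satisfying the duality relation H·P̂ᵀ = P·H. Then: (a) P̂·Hᵀ·D_π = Hᵀ·D_π·←P, where ←P(x,y) = π(y)·P(y,x)/π(x) is the reversed kernel; and (b) the vector φ := Hᵀ·π has all entries strictly positive and satisfies P̂·φ = φ. -/

import Mathlib

open Matrix Finset

/-- The reversed kernel `←P(x,y) = π(y)·P(y,x)/π(x)`. -/
noncomputable def revKernel {I : Type*} (P : Matrix I I ℝ) (π : I → ℝ) : Matrix I I ℝ :=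
  Matrix.of fun x y => π y * P y x / π x

/-- Theorem 1 (i)–(ii): duality `H·P̂ᵀ = P·H` implies
`P̂·Hᵀ·D_π = Hᵀ·D_π·←P`, and `φ = Hᵀ·π` is positive with `P̂·φ = φ`. -/
theorem stmt0 {I J : Type*} [Fintype I] [Fintype J] [DecidableEq I] [DecidableEq J]
    [Nonempty I] [Nonempty J]
    (P : Matrix I I ℝ) (π : I → ℝ) (H : Matrix I J ℝ) (Phat : Matrix J J ℝ)
    (hP0 : ∀ x y, 0 ≤ P x y) (hP1 : ∀ x, ∑ y, P x y = 1)
    (hirr : ∀ x y, ∃ n ≥ 1, 0 < (P ^ n) x y)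
    (hπpos : ∀ x, 0 < π x) (hπ1 : ∑ x, π x = 1)
    (hπP : ∀ y, ∑ x, π x * P x y = π y)
    (hH0 : ∀ x y, 0 ≤ H x y) (hHcol : ∀ y, ∃ x, 0 < H x y)
    (hPhat0 : ∀ x y, 0 ≤ Phat x y)
    (hdual : H * Phatᵀ = P * H) :
    Phat * Hᵀ * Matrix.diagonal π = Hᵀ * Matrix.diagonal π * revKernel P π ∧
    (∀ y, 0 < Hᵀ.mulVec π y) ∧
    Phat.mulVec (Hᵀ.mulVec π) = Hᵀ.mulVec π := by
  have hdual' : ∀ x a, ∑ b, H x b * Phat a b = ∑ y, P x y * H y a := by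
    intro x a
    have := congrFun (congrFun hdual x) a
    simpa [Matrix.mul_apply, Matrix.transpose_apply] using this
  refine ⟨?_, ?_, ?_⟩
  · ext a x
    simp only [Matrix.mul_apply, Matrix.diagonal_apply, Matrix.transpose_apply, revKernel,
      Matrix.of_apply]
    rw [Finset.sum_eq_single x (by intro b _ hb; simp [hb]) (by simp)]
    have hrhs : ∀ y, (∑ x_1, H x_1 a * (if x_1 = y then π x_1 else 0)) * (π x * P x y / π y)
        = H y a * (π x * P x y) := by
      intro y
      rw [Finset.sum_eq_single y (by intro b _ hb; simp [hb]) (by simp)]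
      have h0 := (hπpos y).ne'
      field_simp
      rw [if_pos trivial]
      ring
    simp only [hrhs]
    have : ∑ y, H y a * (π x * P x y) = π x * ∑ y, P x y * H y a := by
      rw [Finset.mul_sum]; apply Finset.sum_congr rfl; intros; ring
    rw [this, ← hdual' x a, Finset.sum_mul, Finset.mul_sum]
    apply Finset.sum_congr rfl; intro b _
    simp [Matrix.mul_apply]; ring
  · intro a
    obtain ⟨x, hx⟩ := hHcol a
    simp only [Matrix.mulVec, dotProduct, Matrix.transpose_apply]
    have : ∀ b ∈ Finset.univ, 0 ≤ H b a * π b := fun b _ =>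
      mul_nonneg (hH0 b a) (hπpos b).le
    exact Finset.sum_pos' this ⟨x, Finset.mem_univ x, mul_pos hx (hπpos x)⟩
  · ext a
    simp only [Matrix.mulVec, dotProduct, Matrix.transpose_apply]
    calc ∑ b, Phat a b * ∑ x, H x b * π x
        = ∑ x, (∑ b, H x b * Phat a b) * π x := by
          simp_rw [Finset.mul_sum, Finset.sum_mul]
          rw [Finset.sum_comm]
          apply Finset.sum_congr rfl; intros; apply Finset.sum_congr rfl; intros; ring
      _ = ∑ x, (∑ y, P x y * H y a) * π x := by simp_rw [hdual']
      _ = ∑ y, H y a * ∑ x, π x * P x y := by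
          simp_rw [Finset.sum_mul, Finset.mul_sum]
          rw [Finset.sum_comm]
          apply Finset.sum_congr rfl; intros; apply Finset.sum_congr rfl; intros; ring
      _ = ∑ y, H y a * π y := by simp_rw [hπP]
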